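/- arXiv:2501.13907 — 2 statements merged into one kernel-verified Lean document; each statement's English description precedes it below -/
import Mathlib

section
/- Let (H, η) be an extended strip decomposition of a graph G, let Q be an induced path in G between two distinct peripheral vertices, and let pq be an edge of H with full edge particle A = A_{pq}^{pq}. If V(Q) ∩ η(pq) = ∅, then |V(Q) ∩ N[A]| ≤ 4. -/
/-- Closed neighborhood of a set `S` in a graph `G`. -/
def closedNbhd {V : Type*} (G : SimpleGraph V) (S : Set V) : Set V :=
  S ∪ {v | ∃ s ∈ S, G.Adj s v}

/-- Open neighborhood of a set `S` in a graph `G`. -/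
def openNbhd {V : Type*} (G : SimpleGraph V) (S : Set V) : Set V :=
  {v | v ∉ S ∧ ∃ s ∈ S, G.Adj s v}

/-- Reachability inside the induced subgraph of `G` on the vertex set `T`. -/
def ReachIn {V : Type*} (G : SimpleGraph V) (T : Set V) : V → V → Prop :=
  Relation.ReflTransGen (fun a b => G.Adj a b ∧ a ∈ T ∧ b ∈ T)

/-- Total weight of a vertex set. -/
noncomputable def wsum {V : Type*} [Fintype V] (w : V → ℕ) (S : Set V) : ℕ :=
  ∑ v ∈ S.toFinite.toFinset, w v

/-- `l` is the vertex sequence of an induced path of `G`: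
nonempty, no repetitions, and two vertices of `l` are adjacent in `G`
iff they are consecutive in `l`. -/
def IsInducedPathList {V : Type*} (G : SimpleGraph V) (l : List V) : Prop :=
  l ≠ [] ∧ l.Nodup ∧
  ∀ (i j : ℕ) (hi : i < l.length) (hj : j < l.length),
    G.Adj (l.get ⟨i, hi⟩) (l.get ⟨j, hj⟩) ↔ (i + 1 = j ∨ j + 1 = i)

/-- Every connected component of the induced subgraph of `G` on `T`
has `w`-weight at most `b`. -/
def CompsSmall {V : Type*} [Fintype V] (G : SimpleGraph V) (w : V → ℕ)
    (T : Set V) (b : ℕ) : Prop :=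
  ∀ v ∈ T, wsum w {u | ReachIn G T v u} ≤ b

/-- `x`, `y`, `z` form a triangle in `H`. -/
def Tri {H' : Type*} (H : SimpleGraph H') (x y z : H') : Prop :=
  H.Adj x y ∧ H.Adj y z ∧ H.Adj x z

/-- An extended strip decomposition `(H, η)` of a graph `G`.
`ηv x` is `η(x)`, `ηe x y` is `η(xy)`, `ηi x y` is the interface `η(xy, x)`,
and `ηt x y z` is `η(xyz)`. -/
structure ESD {V : Type*} {H' : Type*} (G : SimpleGraph V) (H : SimpleGraph H') where
  ηv : H' → Set V
  ηe : H' → H' → Set V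
  ηi : H' → H' → Set V
  ηt : H' → H' → H' → Set V
  ηe_symm : ∀ x y, ηe x y = ηe y x
  ηt_symm12 : ∀ x y z, ηt x y z = ηt y x z
  ηt_symm23 : ∀ x y z, ηt x y z = ηt x z y
  ηe_empty : ∀ x y, ¬ H.Adj x y → ηe x y = ∅
  ηt_empty : ∀ x y z, ¬ Tri H x y z → ηt x y z = ∅
  ηi_sub : ∀ x y, ηi x y ⊆ ηe x y
  cover : ∀ v : V, (∃ x, v ∈ ηv x) ∨ (∃ x y, v ∈ ηe x y) ∨ (∃ x y z, v ∈ ηt x y z)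
  disj_vv : ∀ x y, x ≠ y → ηv x ∩ ηv y = ∅
  disj_ve : ∀ x y z, ηv x ∩ ηe y z = ∅
  disj_vt : ∀ x a b c, ηv x ∩ ηt a b c = ∅
  disj_ee : ∀ x y a b, ¬ (x = a ∧ y = b) → ¬ (x = b ∧ y = a) → ηe x y ∩ ηe a b = ∅
  disj_et : ∀ x y a b c, ηe x y ∩ ηt a b c = ∅
  disj_tt : ∀ a b c d e f, ({a, b, c} : Set H') ≠ ({d, e, f} : Set H') →
    ηt a b c ∩ ηt d e f = ∅
  complete : ∀ x y z, H.Adj x y → H.Adj x z → y ≠ z →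
    ∀ u ∈ ηi x y, ∀ v ∈ ηi x z, G.Adj u v
  edge_cond : ∀ u v : V, G.Adj u v →
    (∃ x, u ∈ ηv x ∧ v ∈ ηv x) ∨
    (∃ x y, u ∈ ηe x y ∧ v ∈ ηe x y) ∨
    (∃ x y z, u ∈ ηt x y z ∧ v ∈ ηt x y z) ∨
    (∃ x y z, H.Adj x y ∧ H.Adj x z ∧ y ≠ z ∧
      ((u ∈ ηi x y ∧ v ∈ ηi x z) ∨ (v ∈ ηi x y ∧ u ∈ ηi x z))) ∨
    (∃ x y, H.Adj x y ∧ ((u ∈ ηi x y ∧ v ∈ ηv x) ∨ (v ∈ ηi x y ∧ u ∈ ηv x))) ∨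
    (∃ x y z, Tri H x y z ∧
      ((u ∈ ηt x y z ∧ v ∈ ηi x y ∩ ηi y x) ∨ (v ∈ ηt x y z ∧ u ∈ ηi x y ∩ ηi y x)))

namespace ESD

variable {V : Type*} {H' : Type*} {G : SimpleGraph V} {H : SimpleGraph H'}

/-- A rigid extended strip decomposition: every edge of `H` has nonempty interfaces
and every isolated vertex `x` of `H` has `η(x) ≠ ∅`. -/
def IsRigid (D : ESD G H) : Prop :=
  (∀ x y, H.Adj x y → (D.ηi x y).Nonempty) ∧
  (∀ x, (∀ y, ¬ H.Adj x y) → (D.ηv x).Nonempty)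

/-- A vertex `z` of `G` is peripheral in `(H, η)`. -/
def Peripheral (D : ESD G H) (z : V) : Prop :=
  ∃ x y, H.Adj x y ∧ (∀ u, H.Adj x u → u = y) ∧ D.ηi x y = {z} ∧ D.ηv x = ∅

/-- The full edge particle `A_{pq}^{pq}`. -/
def fullEdge (D : ESD G H) (p q : H') : Set V :=
  D.ηv p ∪ D.ηv q ∪ D.ηe p q ∪ {v | ∃ r, v ∈ D.ηt p q r}

/-- Every particle of `D` has `w`-weight at most `b`. -/
def ParticlesSmall [Fintype V] (D : ESD G H) (w : V → ℕ) (b : ℕ) : Prop :=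
  (∀ x, wsum w (D.ηv x) ≤ b) ∧
  (∀ x y, H.Adj x y → wsum w (D.ηe x y \ (D.ηi x y ∪ D.ηi y x)) ≤ b) ∧
  (∀ x y, H.Adj x y → wsum w (D.ηv x ∪ (D.ηe x y \ D.ηi y x)) ≤ b) ∧
  (∀ x y, H.Adj x y → wsum w (D.fullEdge x y) ≤ b) ∧
  (∀ x y z, Tri H x y z → wsum w (D.ηt x y z) ≤ b)

end ESD

/-- The subdivided claw `S_{t,t,t}`: a center vertex and three arms of length `t`. -/
def StttRel (t : ℕ) : (Unit ⊕ Fin 3 × Fin t) → (Unit ⊕ Fin 3 × Fin t) → Prop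
  | Sum.inl _, Sum.inr p => p.2.val = 0
  | Sum.inr p, Sum.inr q => p.1 = q.1 ∧ p.2.val + 1 = q.2.val
  | _, _ => False

def Sttt (t : ℕ) : SimpleGraph (Unit ⊕ Fin 3 × Fin t) :=
  SimpleGraph.fromRel (StttRel t)
section Helpers

variable {V : Type*} {H' : Type*} {G : SimpleGraph V} {H : SimpleGraph H'} (D : ESD G H)

namespace ESDAux

lemma dve {a : V} {x y z : H'} (h1 : a ∈ D.ηv x) (h2 : a ∈ D.ηe y z) : False :=
  Set.eq_empty_iff_forall_notMem.mp (D.disj_ve x y z) a ⟨h1, h2⟩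

lemma dvt {a : V} {x b c d : H'} (h1 : a ∈ D.ηv x) (h2 : a ∈ D.ηt b c d) : False :=
  Set.eq_empty_iff_forall_notMem.mp (D.disj_vt x b c d) a ⟨h1, h2⟩

lemma det {a : V} {x y b c d : H'} (h1 : a ∈ D.ηe x y) (h2 : a ∈ D.ηt b c d) : False :=
  Set.eq_empty_iff_forall_notMem.mp (D.disj_et x y b c d) a ⟨h1, h2⟩

lemma dvv {a : V} {x y : H'} (h1 : a ∈ D.ηv x) (h2 : a ∈ D.ηv y) : x = y := by
  by_contra hxy
  exact Set.eq_empty_iff_forall_notMem.mp (D.disj_vv x y hxy) a ⟨h1, h2⟩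

lemma dee {a : V} {x y c d : H'} (h1 : a ∈ D.ηe x y) (h2 : a ∈ D.ηe c d) :
    (x = c ∧ y = d) ∨ (x = d ∧ y = c) := by
  by_contra hcon
  push_neg at hcon
  exact Set.eq_empty_iff_forall_notMem.mp
    (D.disj_ee x y c d (by tauto) (by tauto)) a ⟨h1, h2⟩

lemma dtt {a : V} {x y z c d e : H'} (h1 : a ∈ D.ηt x y z) (h2 : a ∈ D.ηt c d e) :
    ({x, y, z} : Set H') = {c, d, e} := by
  by_contra hcon
  exact Set.eq_empty_iff_forall_notMem.mp (D.disj_tt x y z c d e hcon) a ⟨h1, h2⟩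

lemma adjη {a : V} {x y : H'} (h : a ∈ D.ηe x y) : H.Adj x y := by
  by_contra hn
  rw [D.ηe_empty x y hn] at h
  exact h

lemma adjι {a : V} {x y : H'} (h : a ∈ D.ηi x y) : H.Adj x y :=
  adjη D (D.ηi_sub x y h)

lemma triη {a : V} {x y z : H'} (h : a ∈ D.ηt x y z) : Tri H x y z := by
  by_contra hn
  rw [D.ηt_empty x y z hn] at h
  exact h

lemma mem_T_of {w : V} {x y c d e : H'} (hxy : x ≠ y) (h : w ∈ D.ηt c d e)
    (hx : x = c ∨ x = d ∨ x = e) (hy : y = c ∨ y = d ∨ y = e) :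
    ∃ z, w ∈ D.ηt x y z := by
  obtain ⟨hcd, hde, hce⟩ := triη D h
  have hcd' : c ≠ d := hcd.ne
  have hde' : d ≠ e := hde.ne
  have hce' : c ≠ e := hce.ne
  rcases hx with rfl | rfl | rfl <;> rcases hy with rfl | rfl | rfl
  · exact absurd rfl hxy
  · exact ⟨e, h⟩
  · exact ⟨d, by rw [D.ηt_symm23]; exact h⟩
  · exact ⟨e, by rw [D.ηt_symm12]; exact h⟩
  · exact absurd rfl hxy
  · exact ⟨c, by rw [D.ηt_symm23, D.ηt_symm12]; exact h⟩
  · exact ⟨d, by rw [D.ηt_symm12, D.ηt_symm23]; exact h⟩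
  · exact ⟨c, by rw [D.ηt_symm23, D.ηt_symm12, D.ηt_symm23]; exact h⟩
  · exact absurd rfl hxy

lemma mem_set3 {α : Type*} {x a b c : α} (h : x ∈ ({a, b, c} : Set α)) :
    x = a ∨ x = b ∨ x = c := by
  simpa using h

lemma mem_set3' {α : Type*} (a b c : α) : a ∈ ({a,b,c} : Set α) ∧ b ∈ ({a,b,c} : Set α)
    ∧ c ∈ ({a,b,c} : Set α) := by
  refine ⟨?_, ?_, ?_⟩ <;> simp

lemma mem_T_same {w : V} {c d e p q r : H'} (h : w ∈ D.ηt c d e)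
    (hs : ({c, d, e} : Set H') = {p, q, r}) (hpq : p ≠ q) (hr : Tri H p q r) :
    w ∈ D.ηt p q r := by
  have hp : p = c ∨ p = d ∨ p = e := mem_set3 (by rw [hs]; exact (mem_set3' p q r).1)
  have hq : q = c ∨ q = d ∨ q = e := mem_set3 (by rw [hs]; exact (mem_set3' p q r).2.1)
  obtain ⟨z, hz⟩ := mem_T_of D hpq h hp hq
  have hzset : ({p, q, z} : Set H') = {p, q, r} := by
    rw [dtt D hz h]; exact hs
  have hztri : Tri H p q z := triη D hz
  have hzr : z = r := by
    have hzmem : z ∈ ({p, q, r} : Set H') := by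
      rw [← hzset]; exact (mem_set3' p q z).2.2
    rcases mem_set3 hzmem with rfl | rfl | rfl
    · exact (H.loopless.irrefl _ hztri.2.2).elim
    · exact (H.loopless.irrefl _ hztri.2.1).elim
    · rfl
  rwa [hzr] at hz

/-- the strip region around edge `xy`, on the `x` side -/
def Wset (x y : H') : Set V :=
  D.ηe x y ∪ D.ηv x ∪ {v | ∃ z, v ∈ D.ηt x y z}

lemma mem_Wset_ηe {x y : H'} {v : V} (h : v ∈ D.ηe x y) : v ∈ Wset D x y :=
  Or.inl (Or.inl h)

lemma ηe_eq_of_pair {x y c d : H'} (h : (x = c ∧ y = d) ∨ (x = d ∧ y = c)) :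
    D.ηe c d = D.ηe x y := by
  rcases h with ⟨rfl, rfl⟩ | ⟨rfl, rfl⟩
  · rfl
  · exact (D.ηe_symm _ _)

/-- classification of an edge of `G` leaving the strip region -/
lemma cross {x y : H'} {w w' : V} (hxy : H.Adj x y) (hadj : G.Adj w w')
    (hw : w ∈ Wset D x y) (hw' : w' ∉ Wset D x y) :
    (∃ t, t ≠ y ∧ w' ∈ D.ηi x t) ∨ (∃ t, t ≠ x ∧ w' ∈ D.ηi y t) ∨
      (w ∈ D.ηi y x ∧ w' ∈ D.ηv y) := by
  have hxyne : x ≠ y := hxy.ne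
  rcases D.edge_cond w w' hadj with ⟨c, h1, h2⟩ | ⟨c, d, h1, h2⟩ | ⟨c, d, e, h1, h2⟩ |
      ⟨c, d1, d2, hc1, hc2, hd12, hcase⟩ | ⟨c, d, hc, hcase⟩ | ⟨c, d, e, htri, hcase⟩
  · -- both in ηv c
    rcases hw with (hw | hw) | ⟨z, hw⟩
    · exact absurd hw (fun hw => dve D h1 hw)
    · exact absurd hw' (fun _ => hw' (Or.inl (Or.inr ((dvv D h1 hw) ▸ h2))))
    · exact absurd hw (fun hw => dvt D h1 hw)
  · -- both in ηe c d
    rcases hw with (hw | hw) | ⟨z, hw⟩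
    · exact absurd hw' (fun _ => hw' (mem_Wset_ηe D ((ηe_eq_of_pair D (dee D hw h1)) ▸ h2)))
    · exact absurd h1 (fun h1 => dve D hw h1)
    · exact absurd h1 (fun h1 => det D h1 hw)
  · -- both in ηt c d e
    rcases hw with (hw | hw) | ⟨z, hw⟩
    · exact absurd h1 (fun h1 => det D hw h1)
    · exact absurd h1 (fun h1 => dvt D hw h1)
    · -- w ∈ ηt x y z and ηt c d e
      have hset := dtt D hw h1
      have hx' : x = c ∨ x = d ∨ x = e := mem_set3 (hset ▸ (mem_set3' x y z).1)
      have hy' : y = c ∨ y = d ∨ y = e := mem_set3 (hset ▸ (mem_set3' x y z).2.1)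
      obtain ⟨z', hz'⟩ := mem_T_of D hxyne h2 hx' hy'
      exact absurd (Or.inr ⟨z', hz'⟩ : w' ∈ Wset D x y) hw'
  · -- interface pair at c
    have key : ∀ da db, da ≠ db → w ∈ D.ηi c da → w' ∈ D.ηi c db →
        (∃ t, t ≠ y ∧ w' ∈ D.ηi x t) ∨ (∃ t, t ≠ x ∧ w' ∈ D.ηi y t) ∨
          (w ∈ D.ηi y x ∧ w' ∈ D.ηv y) := by
      intro da db hne hwa hwb
      have hwe : w ∈ D.ηe c da := D.ηi_sub _ _ hwa
      rcases hw with (hw | hw) | ⟨z, hw⟩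
      · rcases dee D hw hwe with ⟨rfl, rfl⟩ | ⟨rfl, rfl⟩
        · exact Or.inl ⟨db, fun hdb => (hne (hdb ▸ rfl)).elim, hwb⟩
        · exact Or.inr (Or.inl ⟨db, fun hdb => (hne (hdb ▸ rfl)).elim, hwb⟩)
      · exact absurd hwe (fun hwe => dve D hw hwe)
      · exact absurd hwe (fun hwe => det D hwe hw)
    rcases hcase with ⟨hwa, hwb⟩ | ⟨hwb, hwa⟩
    · exact key d1 d2 hd12 hwa hwb
    · exact key d2 d1 (Ne.symm hd12) hwa hwb
  · -- interface/ηv pair at c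
    rcases hcase with ⟨hwi, hwv⟩ | ⟨hwi, hwv⟩
    · -- w ∈ ηi c d, w' ∈ ηv c
      have hwe : w ∈ D.ηe c d := D.ηi_sub _ _ hwi
      rcases hw with (hw | hw) | ⟨z, hw⟩
      · rcases dee D hw hwe with ⟨rfl, rfl⟩ | ⟨rfl, rfl⟩
        · exact absurd (Or.inl (Or.inr hwv) : w' ∈ Wset D x y) hw'
        · exact Or.inr (Or.inr ⟨hwi, hwv⟩)
      · exact absurd hwe (fun hwe => dve D hw hwe)
      · exact absurd hwe (fun hwe => det D hwe hw)
    · -- w' ∈ ηi c d, w ∈ ηv c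
      rcases hw with (hw | hw) | ⟨z, hw⟩
      · exact absurd hw (fun hw => dve D hwv hw)
      · have : c = x := dvv D hwv hw
        subst this
        by_cases hdy : d = y
        · subst hdy
          exact absurd (mem_Wset_ηe D (D.ηi_sub _ _ hwi)) hw'
        · exact Or.inl ⟨d, hdy, hwi⟩
      · exact absurd hw (fun hw => dvt D hwv hw)
  · -- triangle/interface
    rcases hcase with ⟨hwt, hwi⟩ | ⟨hwt, hwi⟩
    · -- w ∈ ηt c d e, w' ∈ ηi c d ∩ ηi d c
      rcases hw with (hw | hw) | ⟨z, hw⟩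
      · exact absurd hwt (fun hwt => det D hw hwt)
      · exact absurd hwt (fun hwt => dvt D hw hwt)
      · have hset := dtt D hw hwt
        obtain ⟨hcd, hde, hce⟩ := htri
        have hc' : c = x ∨ c = y ∨ c = z := mem_set3 (by rw [hset]; exact (mem_set3' c d e).1)
        have hd' : d = x ∨ d = y ∨ d = z := mem_set3 (by rw [hset]; exact (mem_set3' c d e).2.1)
        obtain ⟨ht1, ht2, ht3⟩ := triη D hw
        have hzx : z ≠ x := fun hzx => H.loopless.irrefl _ (hzx ▸ ht3)
        have hzy : z ≠ y := fun hzy => H.loopless.irrefl _ (hzy ▸ ht2)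
        rcases hc' with hcc | hcc | hcc <;> rcases hd' with hdd | hdd | hdd
        · exact absurd (hcc.trans hdd.symm) hcd.ne
        · exact absurd (mem_Wset_ηe D (D.ηi_sub _ _ (hcc ▸ hdd ▸ hwi.1))) hw'
        · exact Or.inl ⟨z, hzy, hcc ▸ hdd ▸ hwi.1⟩
        · exact absurd (mem_Wset_ηe D (D.ηi_sub _ _ (hdd ▸ hcc ▸ hwi.2))) hw'
        · exact absurd (hcc.trans hdd.symm) hcd.ne
        · exact Or.inr (Or.inl ⟨z, hzx, hcc ▸ hdd ▸ hwi.1⟩)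
        · exact Or.inl ⟨z, hzy, hdd ▸ hcc ▸ hwi.2⟩
        · exact Or.inr (Or.inl ⟨z, hzx, hdd ▸ hcc ▸ hwi.2⟩)
        · exact absurd (hcc.trans hdd.symm) hcd.ne
    · -- w' ∈ ηt c d e, w ∈ ηi c d ∩ ηi d c
      have hwe : w ∈ D.ηe c d := D.ηi_sub _ _ hwi.1
      rcases hw with (hw | hw) | ⟨z, hw⟩
      · rcases dee D hw hwe with ⟨rfl, rfl⟩ | ⟨rfl, rfl⟩
        · exact absurd (Or.inr ⟨e, hwt⟩ : w' ∈ Wset D x y) hw'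
        · refine absurd (Or.inr ?_ : w' ∈ Wset D x y) hw'
          exact ⟨e, by rw [D.ηt_symm12]; exact hwt⟩
      · exact absurd hwe (fun hwe => dve D hw hwe)
      · exact absurd hwe (fun hwe => det D hwe hw)

lemma cross_ηv {c : H'} {w w' : V} (hadj : G.Adj w w')
    (hw : w ∈ D.ηv c) (hw' : w' ∉ D.ηv c) : ∃ d, w' ∈ D.ηi c d := by
  rcases D.edge_cond w w' hadj with ⟨e, h1, h2⟩ | ⟨e, f, h1, h2⟩ | ⟨e, f, g, h1, h2⟩ |
      ⟨e, d1, d2, hc1, hc2, hd12, hcase⟩ | ⟨e, f, hc, hcase⟩ | ⟨e, f, g, htri, hcase⟩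
  · exact absurd ((dvv D h1 hw) ▸ h2) hw'
  · exact absurd h1 (fun h1 => dve D hw h1)
  · exact absurd h1 (fun h1 => dvt D hw h1)
  · rcases hcase with ⟨h1, h2⟩ | ⟨h1, h2⟩
    · exact absurd (D.ηi_sub _ _ h1) (fun h => dve D hw h)
    · exact absurd (D.ηi_sub _ _ h2) (fun h => dve D hw h)
  · rcases hcase with ⟨h1, h2⟩ | ⟨h1, h2⟩
    · exact absurd (D.ηi_sub _ _ h1) (fun h => dve D hw h)
    · exact ⟨f, (dvv D hw h2) ▸ h1⟩
  · rcases hcase with ⟨h1, h2⟩ | ⟨h1, h2⟩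
    · exact absurd h1 (fun h1 => dvt D hw h1)
    · exact absurd (D.ηi_sub _ _ h2.1) (fun h => dve D hw h)

/-- triangle sets over the edge pq -/
def TT (p q : H') : Set V := {v | ∃ r, v ∈ D.ηt p q r}

lemma step_T {p q r : H'} {w w' : V} (hpq : p ≠ q) (hadj : G.Adj w w')
    (hw : w ∈ D.ηt p q r) (hw' : w' ∈ TT D p q) : w' ∈ D.ηt p q r := by
  obtain ⟨r', hr'⟩ := hw'
  rcases D.edge_cond w w' hadj with ⟨c, h1, h2⟩ | ⟨c, d, h1, h2⟩ | ⟨c, d, e, h1, h2⟩ |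
      ⟨c, d1, d2, hc1, hc2, hd12, hcase⟩ | ⟨c, d, hc, hcase⟩ | ⟨c, d, e, htri, hcase⟩
  · exact absurd h1 (fun h1 => dvt D h1 hw)
  · exact absurd h1 (fun h1 => det D h1 hw)
  · exact mem_T_same D h2 (dtt D h1 hw) hpq (triη D hw)
  · rcases hcase with ⟨h1, h2⟩ | ⟨h1, h2⟩
    · exact absurd (D.ηi_sub _ _ h1) (fun h => det D h hw)
    · exact absurd (D.ηi_sub _ _ h2) (fun h => det D h hw)
  · rcases hcase with ⟨h1, h2⟩ | ⟨h1, h2⟩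
    · exact absurd (D.ηi_sub _ _ h1) (fun h => det D h hw)
    · exact absurd h2 (fun h2 => dvt D h2 hw)
  · rcases hcase with ⟨h1, h2⟩ | ⟨h1, h2⟩
    · exact absurd (D.ηi_sub _ _ h2.1) (fun h => det D h hr')
    · exact absurd (D.ηi_sub _ _ h2.1) (fun h => det D h hw)

lemma cross_T {p q r : H'} {w w' : V} (hpq : p ≠ q) (hadj : G.Adj w w')
    (hw : w ∈ D.ηt p q r) (hw' : w' ∉ TT D p q) :
    w' ∈ D.ηe p q ∨ w' ∈ D.ηi r p ∨ w' ∈ D.ηi r q := by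
  have htri : Tri H p q r := triη D hw
  rcases D.edge_cond w w' hadj with ⟨c, h1, h2⟩ | ⟨c, d, h1, h2⟩ | ⟨c, d, e, h1, h2⟩ |
      ⟨c, d1, d2, hc1, hc2, hd12, hcase⟩ | ⟨c, d, hc, hcase⟩ | ⟨c, d, e, htri', hcase⟩
  · exact absurd h1 (fun h1 => dvt D h1 hw)
  · exact absurd h1 (fun h1 => det D h1 hw)
  · exact absurd (⟨r, mem_T_same D h2 (dtt D h1 hw) hpq htri⟩ : w' ∈ TT D p q) hw'
  · rcases hcase with ⟨h1, h2⟩ | ⟨h1, h2⟩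
    · exact absurd (D.ηi_sub _ _ h1) (fun h => det D h hw)
    · exact absurd (D.ηi_sub _ _ h2) (fun h => det D h hw)
  · rcases hcase with ⟨h1, h2⟩ | ⟨h1, h2⟩
    · exact absurd (D.ηi_sub _ _ h1) (fun h => det D h hw)
    · exact absurd h2 (fun h2 => dvt D h2 hw)
  · rcases hcase with ⟨h1, h2⟩ | ⟨h1, h2⟩
    · -- w ∈ ηt c d e, w' ∈ ηi c d ∩ ηi d c
      have hset := dtt D hw h1
      obtain ⟨hcd, hde, hce⟩ := htri'
      have hc' : c = p ∨ c = q ∨ c = r := mem_set3 (by rw [hset]; exact (mem_set3' c d e).1)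
      have hd' : d = p ∨ d = q ∨ d = r := mem_set3 (by rw [hset]; exact (mem_set3' c d e).2.1)
      rcases hc' with rfl | rfl | hcr <;> rcases hd' with rfl | rfl | hdr
      · exact absurd rfl hcd.ne
      · exact Or.inl (D.ηi_sub _ _ h2.1)
      · subst hdr; exact Or.inr (Or.inl h2.2)
      · exact Or.inl (D.ηi_sub _ _ h2.2)
      · exact absurd rfl hcd.ne
      · subst hdr; exact Or.inr (Or.inr h2.2)
      · subst hcr; exact Or.inr (Or.inl h2.1)
      · subst hcr; exact Or.inr (Or.inr h2.1)
      · subst hcr; exact absurd rfl (hdr ▸ hcd.ne)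
    · exact absurd (D.ηi_sub _ _ h2.1) (fun h => det D h hw)

end ESDAux
end Helpers
section Runs

lemma run_left {S : ℕ → Prop} (h0 : ¬ S 0) :
    ∀ k, S k → ∃ s, 1 ≤ s ∧ s ≤ k ∧ ¬ S (s - 1) ∧ ∀ m, s ≤ m → m ≤ k → S m := by
  intro k
  induction k with
  | zero => exact fun h => absurd h h0
  | succ n ih =>
    intro h
    by_cases hn : S n
    · obtain ⟨s, h1, h2, h3, h4⟩ := ih hn
      refine ⟨s, h1, by omega, h3, fun m hm1 hm2 => ?_⟩
      by_cases hc : m ≤ n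
      · exact h4 m hm1 hc
      · have : m = n + 1 := by omega
        rwa [this]
    · refine ⟨n + 1, by omega, le_refl _, by simpa using hn, fun m hm1 hm2 => ?_⟩
      have : m = n + 1 := by omega
      rwa [this]

lemma run_right {S : ℕ → Prop} {N : ℕ} (hN : ¬ S N) :
    ∀ j, j ≤ N → S j → ∃ e, j ≤ e ∧ e + 1 ≤ N ∧ ¬ S (e + 1) ∧ ∀ m, j ≤ m → m ≤ e → S m := by
  intro j hjN hj
  have h0 : ¬ (fun k => S (N - k)) 0 := by simpa using hN
  have hk : (fun k => S (N - k)) (N - j) := by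
    simp only []
    have : N - (N - j) = j := by omega
    rwa [this]
  obtain ⟨s, h1, h2, h3, h4⟩ := run_left (S := fun k => S (N - k)) h0 (N - j) hk
  refine ⟨N - s, by omega, by omega, ?_, fun m hm1 hm2 => ?_⟩
  · have : N - s + 1 = N - (s - 1) := by omega
    rwa [this]
  · have := h4 (N - m) (by omega) (by omega)
    have he : N - (N - m) = m := by omega
    rwa [he] at this

end Runs
section Classify
variable {V : Type*} {H' : Type*} {G : SimpleGraph V} {H : SimpleGraph H'} (D : ESD G H)
namespace ESDAux

lemma classify {p q : H'} (hpq : H.Adj p q) {v : V}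
    (hvp : v ∉ D.ηv p) (hvq : v ∉ D.ηv q) (hvT : v ∉ TT D p q) (hve : v ∉ D.ηe p q)
    (hv : v ∈ closedNbhd G (D.fullEdge p q)) :
    (∃ t, t ≠ q ∧ v ∈ D.ηi p t) ∨ (∃ t, t ≠ p ∧ v ∈ D.ηi q t) := by
  have hpqne : p ≠ q := hpq.ne
  rcases hv with hA | ⟨a, ha, hadj⟩
  · rcases hA with ((h | h) | h) | h
    · exact absurd h hvp
    · exact absurd h hvq
    · exact absurd h hve
    · exact absurd h hvT
  · have hadj' : G.Adj a v := hadj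
    rcases ha with ((ha | ha) | ha) | ha
    · -- a ∈ ηv p
      rcases D.edge_cond a v hadj' with ⟨c, h1, h2⟩ | ⟨c, d, h1, h2⟩ | ⟨c, d, e, h1, h2⟩ |
          ⟨c, d1, d2, hc1, hc2, hd12, hcase⟩ | ⟨c, d, hc, hcase⟩ | ⟨c, d, e, htri, hcase⟩
      · exact absurd ((dvv D h1 ha) ▸ h2) hvp
      · exact absurd h1 (fun h1 => dve D ha h1)
      · exact absurd h1 (fun h1 => dvt D ha h1)
      · rcases hcase with ⟨h1, h2⟩ | ⟨h1, h2⟩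
        · exact absurd (D.ηi_sub _ _ h1) (fun h => dve D ha h)
        · exact absurd (D.ηi_sub _ _ h2) (fun h => dve D ha h)
      · rcases hcase with ⟨h1, h2⟩ | ⟨h1, h2⟩
        · exact absurd (D.ηi_sub _ _ h1) (fun h => dve D ha h)
        · have hcp : c = p := dvv D h2 ha
          subst hcp
          by_cases hd : d = q
          · subst hd; exact absurd (D.ηi_sub _ _ h1) hve
          · exact Or.inl ⟨d, hd, h1⟩
      · rcases hcase with ⟨h1, h2⟩ | ⟨h1, h2⟩
        · exact absurd h1 (fun h1 => dvt D ha h1)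
        · exact absurd (D.ηi_sub _ _ h2.1) (fun h => dve D ha h)
    · -- a ∈ ηv q
      rcases D.edge_cond a v hadj' with ⟨c, h1, h2⟩ | ⟨c, d, h1, h2⟩ | ⟨c, d, e, h1, h2⟩ |
          ⟨c, d1, d2, hc1, hc2, hd12, hcase⟩ | ⟨c, d, hc, hcase⟩ | ⟨c, d, e, htri, hcase⟩
      · exact absurd ((dvv D h1 ha) ▸ h2) hvq
      · exact absurd h1 (fun h1 => dve D ha h1)
      · exact absurd h1 (fun h1 => dvt D ha h1)
      · rcases hcase with ⟨h1, h2⟩ | ⟨h1, h2⟩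
        · exact absurd (D.ηi_sub _ _ h1) (fun h => dve D ha h)
        · exact absurd (D.ηi_sub _ _ h2) (fun h => dve D ha h)
      · rcases hcase with ⟨h1, h2⟩ | ⟨h1, h2⟩
        · exact absurd (D.ηi_sub _ _ h1) (fun h => dve D ha h)
        · have hcq : c = q := dvv D h2 ha
          by_cases hd : d = p
          · refine absurd ?_ hve
            have h1' : v ∈ D.ηe q p := D.ηi_sub _ _ (hd ▸ hcq ▸ h1)
            rw [D.ηe_symm] at h1'
            exact h1'
          · exact Or.inr ⟨d, hd, hcq ▸ h1⟩
      · rcases hcase with ⟨h1, h2⟩ | ⟨h1, h2⟩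
        · exact absurd h1 (fun h1 => dvt D ha h1)
        · exact absurd (D.ηi_sub _ _ h2.1) (fun h => dve D ha h)
    · -- a ∈ ηe p q
      rcases D.edge_cond a v hadj' with ⟨c, h1, h2⟩ | ⟨c, d, h1, h2⟩ | ⟨c, d, e, h1, h2⟩ |
          ⟨c, d1, d2, hc1, hc2, hd12, hcase⟩ | ⟨c, d, hc, hcase⟩ | ⟨c, d, e, htri, hcase⟩
      · exact absurd ha (fun ha => dve D h1 ha)
      · refine absurd ?_ hve
        rw [ηe_eq_of_pair D (dee D h1 ha)]
        exact h2
      · exact absurd ha (fun ha => det D ha h1)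
      · have key : ∀ da db, da ≠ db → a ∈ D.ηi c da → v ∈ D.ηi c db →
            (∃ t, t ≠ q ∧ v ∈ D.ηi p t) ∨ (∃ t, t ≠ p ∧ v ∈ D.ηi q t) := by
          intro da db hnedd hia hib
          rcases dee D (D.ηi_sub _ _ hia) ha with ⟨hh1, hh2⟩ | ⟨hh1, hh2⟩
          · exact Or.inl ⟨db, fun h => hnedd (hh2.trans h.symm), hh1 ▸ hib⟩
          · exact Or.inr ⟨db, fun h => hnedd (hh2.trans h.symm), hh1 ▸ hib⟩
        rcases hcase with ⟨h1, h2⟩ | ⟨h1, h2⟩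
        · exact key d1 d2 hd12 h1 h2
        · exact key d2 d1 (Ne.symm hd12) h2 h1
      · rcases hcase with ⟨h1, h2⟩ | ⟨h1, h2⟩
        · rcases dee D (D.ηi_sub _ _ h1) ha with ⟨hh1, hh2⟩ | ⟨hh1, hh2⟩
          · exact absurd (hh1 ▸ h2) hvp
          · exact absurd (hh1 ▸ h2) hvq
        · exact absurd h2 (fun h2 => dve D h2 ha)
      · rcases hcase with ⟨h1, h2⟩ | ⟨h1, h2⟩
        · exact absurd ha (fun ha => det D ha h1)
        · rcases dee D (D.ηi_sub _ _ h2.1) ha with ⟨hh1, hh2⟩ | ⟨hh1, hh2⟩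
          · exact absurd (⟨e, hh2 ▸ hh1 ▸ h1⟩ : v ∈ TT D p q) hvT
          · refine absurd (⟨e, ?_⟩ : v ∈ TT D p q) hvT
            have h1' : v ∈ D.ηt d c e := (D.ηt_symm12 c d e) ▸ h1
            exact hh2 ▸ hh1 ▸ h1'
    · -- a ∈ TT p q
      obtain ⟨r, har⟩ := ha
      have htr : Tri H p q r := triη D har
      rcases D.edge_cond a v hadj' with ⟨c, h1, h2⟩ | ⟨c, d, h1, h2⟩ | ⟨c, d, e, h1, h2⟩ |
          ⟨c, d1, d2, hc1, hc2, hd12, hcase⟩ | ⟨c, d, hc, hcase⟩ | ⟨c, d, e, htri, hcase⟩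
      · exact absurd h1 (fun h1 => dvt D h1 har)
      · exact absurd h1 (fun h1 => det D h1 har)
      · exact absurd (⟨r, mem_T_same D h2 (dtt D h1 har) hpqne htr⟩ : v ∈ TT D p q) hvT
      · rcases hcase with ⟨h1, h2⟩ | ⟨h1, h2⟩
        · exact absurd (D.ηi_sub _ _ h1) (fun h => det D h har)
        · exact absurd (D.ηi_sub _ _ h2) (fun h => det D h har)
      · rcases hcase with ⟨h1, h2⟩ | ⟨h1, h2⟩
        · exact absurd (D.ηi_sub _ _ h1) (fun h => det D h har)
        · exact absurd h2 (fun h2 => dvt D h2 har)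
      · rcases hcase with ⟨h1, h2⟩ | ⟨h1, h2⟩
        · -- a ∈ ηt c d e, v ∈ ηi c d ∩ ηi d c
          have hset := dtt D h1 har
          obtain ⟨hcd, hde, hce⟩ := htri
          have hrp : r ≠ p := fun h => H.loopless.irrefl _ (h ▸ htr.2.2)
          have hrq : r ≠ q := fun h => H.loopless.irrefl _ (h ▸ htr.2.1)
          have hc' : c = p ∨ c = q ∨ c = r := mem_set3 (by rw [← hset]; exact (mem_set3' c d e).1)
          have hd' : d = p ∨ d = q ∨ d = r := mem_set3 (by rw [← hset]; exact (mem_set3' c d e).2.1)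
          rcases hc' with hcc | hcc | hcc <;> rcases hd' with hdd | hdd | hdd
          · exact absurd (hcc.trans hdd.symm) hcd.ne
          · exact absurd (hcc ▸ hdd ▸ (D.ηi_sub _ _ h2.1)) hve
          · exact Or.inl ⟨r, hrq, hcc ▸ hdd ▸ h2.1⟩
          · exact absurd ((D.ηe_symm q p) ▸ (hdd ▸ hcc ▸ (D.ηi_sub _ _ h2.1))) hve
          · exact absurd (hcc.trans hdd.symm) hcd.ne
          · exact Or.inr ⟨r, hrp, hcc ▸ hdd ▸ h2.1⟩
          · exact Or.inl ⟨r, hrq, hdd ▸ hcc ▸ h2.2⟩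
          · exact Or.inr ⟨r, hrp, hdd ▸ hcc ▸ h2.2⟩
          · exact absurd (hcc.trans hdd.symm) hcd.ne
        · exact absurd (D.ηi_sub _ _ h2.1) (fun h => det D h har)

end ESDAux
end Classify
/-- an induced path between two distinct peripheral vertices that is
disjoint from `η(pq)` has at most four vertices in the closed neighborhood of the
full edge particle `A_{pq}^{pq}`. -/
theorem few_neighbors_of_particle {V : Type*} {H' : Type*}
    (G : SimpleGraph V) (H : SimpleGraph H') (D : ESD G H)
    (l : List V) (hl : IsInducedPathList G l) (hne : l ≠ [])
    (hx : D.Peripheral (l.head hne)) (hy : D.Peripheral (l.getLast hne))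
    (hxy : l.head hne ≠ l.getLast hne)
    (p q : H') (hpq : H.Adj p q) (hdisj : ∀ u ∈ l, u ∉ D.ηe p q) :
    Set.ncard {v | v ∈ l ∧ v ∈ closedNbhd G (D.fullEdge p q)} ≤ 4 := by
  classical
  open ESDAux in
  obtain ⟨hne0, hnodup, hiff⟩ := hl
  have hn0 : 0 < l.length := List.length_pos_iff.mpr hne
  have hn1 : l.length - 1 < l.length := by omega
  have hhead : l.head hne = l.get ⟨0, hn0⟩ := by
    cases l with
    | nil => exact absurd rfl hne
    | cons a t => rfl
  have hlast : l.getLast hne = l.get ⟨l.length - 1, hn1⟩ := by rw [List.getLast_eq_getElem]; rfl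
  rw [hhead] at hx
  rw [hlast] at hy
  rw [hhead, hlast] at hxy
  obtain ⟨a1, b1, hab1, hdeg1, hii1, hvv1⟩ := hx
  obtain ⟨a2, b2, hab2, hdeg2, hii2, hvv2⟩ := hy
  have hz1i : l.get ⟨0, hn0⟩ ∈ D.ηi a1 b1 := by rw [hii1]; rfl
  have hz2i : l.get ⟨l.length - 1, hn1⟩ ∈ D.ηi a2 b2 := by rw [hii2]; rfl
  have hz1e : l.get ⟨0, hn0⟩ ∈ D.ηe a1 b1 := D.ηi_sub _ _ hz1i
  have hz2e : l.get ⟨l.length - 1, hn1⟩ ∈ D.ηe a2 b2 := D.ηi_sub _ _ hz2i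
  have consadj : ∀ (a b : ℕ) (ha : a < l.length) (hb : b < l.length), a + 1 = b →
      G.Adj (l.get ⟨a, ha⟩) (l.get ⟨b, hb⟩) :=
    fun a b ha hb h => (hiff a b ha hb).mpr (Or.inl h)
  have adjcon : ∀ (a b : ℕ) (ha : a < l.length) (hb : b < l.length),
      G.Adj (l.get ⟨a, ha⟩) (l.get ⟨b, hb⟩) → a + 1 = b ∨ b + 1 = a :=
    fun a b ha hb h => (hiff a b ha hb).mp h
  have idx : ∀ (a b : ℕ) (ha : a < l.length) (hb : b < l.length),
      l.get ⟨a, ha⟩ = l.get ⟨b, hb⟩ → a = b := by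
    intro a b ha hb h
    have := hnodup.get_inj_iff.mp h
    exact congrArg Fin.val this
  -- MAIN LEMMA: no interface of D contains two non-consecutive vertices of the path
  have noTwo : ∀ (μ : ℕ) (x y : H') (i j : ℕ) (hi : i < l.length) (hj : j < l.length),
      i + 2 ≤ j → i + (l.length - 1 - j) ≤ μ →
      l.get ⟨i, hi⟩ ∈ D.ηi x y → l.get ⟨j, hj⟩ ∈ D.ηi x y → False := by
    intro μ
    induction μ using Nat.strong_induction_on with
    | _ μ IH =>
    intro x y i j hi hj hij hμ hu hv
    have hxyH : H.Adj x y := ESDAux.adjι D hu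
    have hxyne : x ≠ y := hxyH.ne
    have huW : l.get ⟨i, hi⟩ ∈ ESDAux.Wset D x y := ESDAux.mem_Wset_ηe D (D.ηi_sub _ _ hu)
    have hvW : l.get ⟨j, hj⟩ ∈ ESDAux.Wset D x y := ESDAux.mem_Wset_ηe D (D.ηi_sub _ _ hv)
    -- both singleton cases for endpoints inside W
    -- case analysis on z1 ∈ W
    by_cases hW0 : l.get ⟨0, hn0⟩ ∈ ESDAux.Wset D x y
    · -- z1 ∈ W
      have hz1exy : l.get ⟨0, hn0⟩ ∈ D.ηe x y := by
        rcases hW0 with (h | h) | ⟨z, h⟩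
        · exact h
        · exact absurd h (fun h => ESDAux.dve D h hz1e)
        · exact absurd h (fun h => ESDAux.det D hz1e h)
      rcases ESDAux.dee D hz1e hz1exy with ⟨ha1, hb1⟩ | ⟨ha1, hb1⟩
      · -- a1 = x, b1 = y : interface ηi x y is the singleton {z1}
        have hsing : D.ηi x y = {l.get ⟨0, hn0⟩} := by rw [← ha1, ← hb1]; exact hii1
        rw [hsing] at hu hv
        have hieq : i = j := (idx i 0 hi hn0 hu).trans (idx j 0 hj hn0 hv).symm
        omega
      · -- a1 = y, b1 = x : y is pendant with only neighbour x
        have hdegy : ∀ t, H.Adj y t → t = x := fun t ht => hb1 ▸ (hdeg1 t (ha1 ▸ ht))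
        have hvy : D.ηv y = ∅ := ha1 ▸ hvv1
        have hiyx : D.ηi y x = {l.get ⟨0, hn0⟩} := by rw [← ha1, ← hb1]; exact hii1
        -- the whole path from j onwards stays in W
        have suff : ∀ m, j ≤ m → ∀ hm : m < l.length, l.get ⟨m, hm⟩ ∈ ESDAux.Wset D x y := by
          intro m hjm
          induction m, hjm using Nat.le_induction with
          | base => intro hm; exact hvW
          | succ m hjm ihm =>
            intro hm1
            have hm : m < l.length := by omega
            have hprev := ihm hm
            by_contra hnin
            rcases ESDAux.cross D hxyH (consadj m (m+1) hm hm1 rfl) hprev hnin with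
              ⟨t, hty, hmem⟩ | ⟨t, htx, hmem⟩ | ⟨hmem1, hmem2⟩
            · have hA1 := D.complete x t y (ESDAux.adjι D hmem) hxyH hty _ hmem _ hu
              have hA2 := D.complete x t y (ESDAux.adjι D hmem) hxyH hty _ hmem _ hv
              have hc1 := adjcon (m+1) i hm1 hi hA1
              have hc2 := adjcon (m+1) j hm1 hj hA2
              omega
            · exact htx (hdegy t (ESDAux.adjι D hmem))
            · rw [hvy] at hmem2; exact hmem2
        have hz2W := suff (l.length - 1) (by omega) hn1
        have hz2exy : l.get ⟨l.length - 1, hn1⟩ ∈ D.ηe x y := by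
          rcases hz2W with (h | h) | ⟨z, h⟩
          · exact h
          · exact absurd h (fun h => ESDAux.dve D h hz2e)
          · exact absurd h (fun h => ESDAux.det D hz2e h)
        rcases ESDAux.dee D hz2e hz2exy with ⟨ha2, hb2⟩ | ⟨ha2, hb2⟩
        · have hsing : D.ηi x y = {l.get ⟨l.length - 1, hn1⟩} := by
            rw [← ha2, ← hb2]; exact hii2
          rw [hsing] at hu hv
          have hieq : i = j := (idx i (l.length-1) hi hn1 hu).trans (idx j (l.length-1) hj hn1 hv).symm
          omega
        · have hiyx2 : D.ηi y x = {l.get ⟨l.length - 1, hn1⟩} := by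
            rw [← ha2, ← hb2]; exact hii2
          have : l.get ⟨0, hn0⟩ = l.get ⟨l.length - 1, hn1⟩ := by
            have h01 : l.get ⟨0, hn0⟩ ∈ D.ηi y x := by rw [hiyx]; rfl
            rw [hiyx2] at h01
            exact h01
          exact hxy this
    · -- z1 ∉ W
      by_cases hW1 : l.get ⟨l.length - 1, hn1⟩ ∈ ESDAux.Wset D x y
      · -- z2 ∈ W, z1 ∉ W : impossible
        have hz2exy : l.get ⟨l.length - 1, hn1⟩ ∈ D.ηe x y := by
          rcases hW1 with (h | h) | ⟨z, h⟩
          · exact h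
          · exact absurd h (fun h => ESDAux.dve D h hz2e)
          · exact absurd h (fun h => ESDAux.det D hz2e h)
        rcases ESDAux.dee D hz2e hz2exy with ⟨ha2, hb2⟩ | ⟨ha2, hb2⟩
        · have hsing : D.ηi x y = {l.get ⟨l.length - 1, hn1⟩} := by
            rw [← ha2, ← hb2]; exact hii2
          rw [hsing] at hu hv
          have hieq : i = j := (idx i (l.length-1) hi hn1 hu).trans (idx j (l.length-1) hj hn1 hv).symm
          omega
        · have hdegy : ∀ t, H.Adj y t → t = x := fun t ht => hb2 ▸ (hdeg2 t (ha2 ▸ ht))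
          have hvy : D.ηv y = ∅ := ha2 ▸ hvv2
          have hrl := run_left
            (S := fun k => ∀ hk : k < l.length, l.get ⟨k, hk⟩ ∈ ESDAux.Wset D x y)
            (fun h => hW0 (h hn0)) i (fun hk => huW)
          obtain ⟨s, hs1, hs2, hs3, hs4⟩ := hrl
          have hsn : s < l.length := lt_of_le_of_lt hs2 hi
          have hsn' : s - 1 < l.length := lt_of_le_of_lt (Nat.sub_le s 1) hsn
          have hwmem : l.get ⟨s, hsn⟩ ∈ ESDAux.Wset D x y := hs4 s (le_refl s) hs2 hsn
          have hwnot : l.get ⟨s-1, hsn'⟩ ∉ ESDAux.Wset D x y := fun h => hs3 (fun _ => h)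
          clear hs3 hs4
          have hadj : G.Adj (l.get ⟨s, hsn⟩) (l.get ⟨s-1, hsn'⟩) :=
            (consadj (s-1) s hsn' hsn (by omega)).symm
          rcases ESDAux.cross D hxyH hadj hwmem hwnot with
            ⟨t, hty, hmem⟩ | ⟨t, htx, hmem⟩ | ⟨hmem1, hmem2⟩
          · have hA1 := D.complete x t y (ESDAux.adjι D hmem) hxyH hty _ hmem _ hu
            have hA2 := D.complete x t y (ESDAux.adjι D hmem) hxyH hty _ hmem _ hv
            have hc1 := adjcon (s-1) i hsn' hi hA1
            have hc2 := adjcon (s-1) j hsn' hj hA2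
            omega
          · exact htx (hdegy t (ESDAux.adjι D hmem))
          · rw [hvy] at hmem2; exact hmem2
      · -- main case: both endpoints outside W
        -- left extraction
        have exL : ∃ (c : H') (k : ℕ) (hk : k < l.length),
            k + 1 ≤ i ∧ l.get ⟨k, hk⟩ ∈ D.ηi y c := by
          have hrl := run_left
            (S := fun k => ∀ hk : k < l.length, l.get ⟨k, hk⟩ ∈ ESDAux.Wset D x y)
            (fun h => hW0 (h hn0)) i (fun hk => huW)
          obtain ⟨s, hs1, hs2, hs3, hs4⟩ := hrl
          have hsn : s < l.length := lt_of_le_of_lt hs2 hi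
          have hsn' : s - 1 < l.length := lt_of_le_of_lt (Nat.sub_le s 1) hsn
          have hwmem : l.get ⟨s, hsn⟩ ∈ ESDAux.Wset D x y := hs4 s (le_refl s) hs2 hsn
          have hwnot : l.get ⟨s-1, hsn'⟩ ∉ ESDAux.Wset D x y := fun h => hs3 (fun _ => h)
          clear hs3 hs4
          have hadj : G.Adj (l.get ⟨s, hsn⟩) (l.get ⟨s-1, hsn'⟩) :=
            (consadj (s-1) s hsn' hsn (by omega)).symm
          rcases ESDAux.cross D hxyH hadj hwmem hwnot with
            ⟨t, hty, hmem⟩ | ⟨t, htx, hmem⟩ | ⟨hmem1, hmem2⟩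
          · exfalso
            have hA1 := D.complete x t y (ESDAux.adjι D hmem) hxyH hty _ hmem _ hu
            have hA2 := D.complete x t y (ESDAux.adjι D hmem) hxyH hty _ hmem _ hv
            have hc1 := adjcon (s-1) i hsn' hi hA1
            have hc2 := adjcon (s-1) j hsn' hj hA2
            omega
          · exact ⟨t, s-1, hsn', by omega, hmem⟩
          · by_cases hsi : s = i
            · subst hsi
              have hrl2 := run_left
                (S := fun k => ∀ hk : k < l.length, l.get ⟨k, hk⟩ ∈ D.ηv y)
                (fun h => ESDAux.dve D (h hn0) hz1e) (s-1) (fun hk => hmem2)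
              obtain ⟨s2, hq1, hq2, hq3, hq4⟩ := hrl2
              have hs2n : s2 < l.length := lt_of_le_of_lt (le_trans hq2 (Nat.sub_le s 1)) hsn
              have hs2n' : s2 - 1 < l.length := lt_of_le_of_lt (Nat.sub_le s2 1) hs2n
              have hvm : l.get ⟨s2, hs2n⟩ ∈ D.ηv y := hq4 s2 (le_refl _) hq2 hs2n
              have hvn : l.get ⟨s2-1, hs2n'⟩ ∉ D.ηv y := fun h => hq3 (fun _ => h)
              clear hq3 hq4
              have hadj2 : G.Adj (l.get ⟨s2, hs2n⟩) (l.get ⟨s2-1, hs2n'⟩) :=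
                (consadj (s2-1) s2 hs2n' hs2n (by omega)).symm
              obtain ⟨d, hd⟩ := ESDAux.cross_ηv D hadj2 hvm hvn
              exact ⟨d, s2-1, hs2n', by omega, hd⟩
            · exact ⟨x, s, hsn, by omega, hmem1⟩
        have exR : ∃ (c : H') (k : ℕ) (hk : k < l.length),
            j + 1 ≤ k ∧ l.get ⟨k, hk⟩ ∈ D.ηi y c := by
          have hrr := run_right
            (S := fun k => ∀ hk : k < l.length, l.get ⟨k, hk⟩ ∈ ESDAux.Wset D x y)
            (N := l.length - 1)
            (fun h => hW1 (h hn1)) j (by omega) (fun hk => hvW)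
          obtain ⟨e, he1, he2, he3, he4⟩ := hrr
          have hen1 : e + 1 < l.length := lt_of_le_of_lt he2 hn1
          have hen : e < l.length := lt_of_le_of_lt (Nat.le_succ e) hen1
          have hwm : l.get ⟨e, hen⟩ ∈ ESDAux.Wset D x y := he4 e he1 (le_refl _) hen
          have hwn : l.get ⟨e+1, hen1⟩ ∉ ESDAux.Wset D x y := fun h => he3 (fun _ => h)
          clear he3 he4
          have hadj : G.Adj (l.get ⟨e, hen⟩) (l.get ⟨e+1, hen1⟩) :=
            consadj e (e+1) hen hen1 rfl
          rcases ESDAux.cross D hxyH hadj hwm hwn with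
            ⟨t, hty, hmem⟩ | ⟨t, htx, hmem⟩ | ⟨hmem1, hmem2⟩
          · exfalso
            have hA1 := D.complete x t y (ESDAux.adjι D hmem) hxyH hty _ hmem _ hu
            have hc1 := adjcon (e+1) i hen1 hi hA1
            omega
          · exact ⟨t, e+1, hen1, by omega, hmem⟩
          · by_cases hej : e = j
            · subst hej
              have hrr2 := run_right
                (S := fun k => ∀ hk : k < l.length, l.get ⟨k, hk⟩ ∈ D.ηv y)
                (N := l.length - 1)
                (fun h => ESDAux.dve D (h hn1) hz2e) (e+1) he2 (fun hk => hmem2)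
              obtain ⟨e2, hr1, hr2, hr3, hr4⟩ := hrr2
              have he2n1 : e2 + 1 < l.length := lt_of_le_of_lt hr2 hn1
              have he2n : e2 < l.length := lt_of_le_of_lt (Nat.le_succ e2) he2n1
              have hvm : l.get ⟨e2, he2n⟩ ∈ D.ηv y := hr4 e2 hr1 (le_refl _) he2n
              have hvn : l.get ⟨e2+1, he2n1⟩ ∉ D.ηv y := fun h => hr3 (fun _ => h)
              clear hr3 hr4
              have hadj2 : G.Adj (l.get ⟨e2, he2n⟩) (l.get ⟨e2+1, he2n1⟩) :=
                consadj e2 (e2+1) he2n he2n1 rfl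
              obtain ⟨d, hd⟩ := ESDAux.cross_ηv D hadj2 hvm hvn
              exact ⟨d, e2+1, he2n1, by omega, hd⟩
            · exact ⟨x, e, hen, by omega, hmem1⟩
        obtain ⟨c1, k1, hk1, hk1i, hm1⟩ := exL
        obtain ⟨c2, k2, hk2, hk2j, hm2⟩ := exR
        by_cases hc : c1 = c2
        · subst hc
          have hμ' : k1 + (l.length - 1 - k2) < μ := by omega
          exact IH _ hμ' y c1 k1 k2 hk1 hk2 (by omega) (le_refl _) hm1 hm2
        · have hA := D.complete y c1 c2 (ESDAux.adjι D hm1) (ESDAux.adjι D hm2) hc _ hm1 _ hm2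
          have := adjcon k1 k2 hk1 hk2 hA
          omega
  -- no vertex of the path lies in any vertex set ηv c
  have noV : ∀ (c : H') (k : ℕ) (hk : k < l.length), l.get ⟨k, hk⟩ ∉ D.ηv c := by
    intro c k hk hmem
    have hrl := run_left
      (S := fun m => ∀ hm : m < l.length, l.get ⟨m, hm⟩ ∈ D.ηv c)
      (fun h => ESDAux.dve D (h hn0) hz1e) k (fun hm => hmem)
    obtain ⟨s, hs1, hs2, hs3, hs4⟩ := hrl
    have hsn : s < l.length := lt_of_le_of_lt hs2 hk
    have hsn' : s - 1 < l.length := lt_of_le_of_lt (Nat.sub_le s 1) hsn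
    have hvm : l.get ⟨s, hsn⟩ ∈ D.ηv c := hs4 s (le_refl _) hs2 hsn
    have hvn : l.get ⟨s-1, hsn'⟩ ∉ D.ηv c := fun h => hs3 (fun _ => h)
    clear hs3 hs4
    obtain ⟨d1, hd1⟩ := ESDAux.cross_ηv D
      ((consadj (s-1) s hsn' hsn (by omega)).symm) hvm hvn
    have hrr := run_right
      (S := fun m => ∀ hm : m < l.length, l.get ⟨m, hm⟩ ∈ D.ηv c)
      (N := l.length - 1)
      (fun h => ESDAux.dve D (h hn1) hz2e) k (by omega) (fun hm => hmem)
    obtain ⟨e, he1, he2, he3, he4⟩ := hrr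
    have hen1 : e + 1 < l.length := lt_of_le_of_lt he2 hn1
    have hen : e < l.length := lt_of_le_of_lt (Nat.le_succ e) hen1
    have hvm2 : l.get ⟨e, hen⟩ ∈ D.ηv c := he4 e he1 (le_refl _) hen
    have hvn2 : l.get ⟨e+1, hen1⟩ ∉ D.ηv c := fun h => he3 (fun _ => h)
    clear he3 he4
    obtain ⟨d2, hd2⟩ := ESDAux.cross_ηv D
      (consadj e (e+1) hen hen1 rfl) hvm2 hvn2
    by_cases hdd : d1 = d2
    · subst hdd
      exact noTwo ((s-1) + (l.length - 1 - (e+1))) c d1 (s-1) (e+1) hsn' hen1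
        (by omega) (le_refl _) hd1 hd2
    · have hA := D.complete c d1 d2 (ESDAux.adjι D hd1) (ESDAux.adjι D hd2) hdd _ hd1 _ hd2
      have hcons := adjcon (s-1) (e+1) hsn' hen1 hA
      -- consecutive: either s-1+1 = e+1 (i.e. s-1 = e, impossible since s ≤ k ≤ e and
      -- membership differs) or e+2 = s-1 (impossible)
      have hse : ¬ (s - 1 = e) := by
        intro hq
        have : l.get ⟨s-1, hsn'⟩ ∈ D.ηv c := by
          have he' : (⟨s-1, hsn'⟩ : Fin l.length) = ⟨e, hen⟩ := Fin.ext hq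
          rw [he']
          exact hvm2
        exact hvn this
      omega
  -- no vertex of the path lies in any triangle set over pq
  have noT : ∀ (k : ℕ) (hk : k < l.length), l.get ⟨k, hk⟩ ∉ ESDAux.TT D p q := by
    intro k hk hmem
    obtain ⟨r, hr⟩ := hmem
    have htri : Tri H p q r := ESDAux.triη D hr
    have hz1T : l.get ⟨0, hn0⟩ ∉ ESDAux.TT D p q := fun h => ESDAux.det D hz1e h.choose_spec
    have hz2T : l.get ⟨l.length - 1, hn1⟩ ∉ ESDAux.TT D p q :=
      fun h => ESDAux.det D hz2e h.choose_spec
    have hrl := run_left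
      (S := fun m => ∀ hm : m < l.length, l.get ⟨m, hm⟩ ∈ ESDAux.TT D p q)
      (fun h => hz1T (h hn0)) k (fun hm => ⟨r, hr⟩)
    obtain ⟨s, hs1, hs2, hs3, hs4⟩ := hrl
    have hrr := run_right
      (S := fun m => ∀ hm : m < l.length, l.get ⟨m, hm⟩ ∈ ESDAux.TT D p q)
      (N := l.length - 1)
      (fun h => hz2T (h hn1)) k (by omega) (fun hm => ⟨r, hr⟩)
    obtain ⟨e, he1, he2, he3, he4⟩ := hrr
    have hsn : s < l.length := lt_of_le_of_lt hs2 hk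
    have hsn' : s - 1 < l.length := lt_of_le_of_lt (Nat.sub_le s 1) hsn
    have hen1 : e + 1 < l.length := lt_of_le_of_lt he2 hn1
    have hen : e < l.length := lt_of_le_of_lt (Nat.le_succ e) hen1
    have hb1 : l.get ⟨s-1, hsn'⟩ ∉ ESDAux.TT D p q := fun h => hs3 (fun _ => h)
    have hb2 : l.get ⟨e+1, hen1⟩ ∉ ESDAux.TT D p q := fun h => he3 (fun _ => h)
    -- propagate the triangle apex r down to position s
    have down : ∀ d m, m + d = k → s ≤ m → ∀ hm : m < l.length,
        l.get ⟨m, hm⟩ ∈ D.ηt p q r := by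
      intro d
      induction d with
      | zero =>
        intro m hm0 _ hm
        have hmk : m = k := by omega
        subst hmk
        exact hr
      | succ d ihd =>
        intro m hmd hsm hm
        have hm1 : m + 1 < l.length := by omega
        have hnext : l.get ⟨m+1, hm1⟩ ∈ D.ηt p q r := ihd (m+1) (by omega) (by omega) hm1
        have hcur : l.get ⟨m, hm⟩ ∈ ESDAux.TT D p q := hs4 m hsm (by omega) hm
        exact ESDAux.step_T D hpq.ne (consadj m (m+1) hm hm1 rfl).symm hnext hcur
    -- propagate the triangle apex r up to position e
    have up : ∀ m, k ≤ m → m ≤ e → ∀ hm : m < l.length, l.get ⟨m, hm⟩ ∈ D.ηt p q r := by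
      intro m hkm
      induction m, hkm using Nat.le_induction with
      | base => intro _ hm; exact hr
      | succ m hkm ihm =>
        intro hme hm1
        have hm : m < l.length := by omega
        have hprev : l.get ⟨m, hm⟩ ∈ D.ηt p q r := ihm (by omega) hm
        have hnext : l.get ⟨m+1, hm1⟩ ∈ ESDAux.TT D p q := he4 (m+1) (by omega) hme hm1
        exact ESDAux.step_T D hpq.ne (consadj m (m+1) hm hm1 rfl) hprev hnext
    have hsr : l.get ⟨s, hsn⟩ ∈ D.ηt p q r := down (k - s) s (by omega) (le_refl _) hsn
    have her : l.get ⟨e, hen⟩ ∈ D.ηt p q r := up e he1 (le_refl _) hen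
    clear hs3 hs4 he3 he4
    have hcr1 := ESDAux.cross_T D hpq.ne ((consadj (s-1) s hsn' hsn (by omega)).symm) hsr hb1
    have hcr2 := ESDAux.cross_T D hpq.ne (consadj e (e+1) hen hen1 rfl) her hb2
    have hrp : H.Adj r p := htri.2.2.symm
    have hrq : H.Adj r q := htri.2.1.symm
    rcases hcr1 with hc1 | hc1 | hc1
    · exact hdisj _ (List.get_mem l _) hc1
    all_goals rcases hcr2 with hc2 | hc2 | hc2
    · exact hdisj _ (List.get_mem l _) hc2
    · -- both in ηi r p
      exact noTwo ((s-1) + (l.length - 1 - (e+1))) r p (s-1) (e+1) hsn' hen1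
        (by omega) (le_refl _) hc1 hc2
    · -- ηi r p and ηi r q
      have hA := D.complete r p q hrp hrq hpq.ne _ hc1 _ hc2
      have := adjcon (s-1) (e+1) hsn' hen1 hA
      omega
    · exact hdisj _ (List.get_mem l _) hc2
    · have hA := D.complete r q p hrq hrp (Ne.symm hpq.ne) _ hc1 _ hc2
      have := adjcon (s-1) (e+1) hsn' hen1 hA
      omega
    · exact noTwo ((s-1) + (l.length - 1 - (e+1))) r q (s-1) (e+1) hsn' hen1
        (by omega) (le_refl _) hc1 hc2
  -- counting
  have hclass : ∀ v, v ∈ l → v ∈ closedNbhd G (D.fullEdge p q) →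
      (∃ t, t ≠ q ∧ v ∈ D.ηi p t) ∨ (∃ t, t ≠ p ∧ v ∈ D.ηi q t) := by
    intro v hvl hvN
    obtain ⟨⟨k, hk⟩, rfl⟩ := List.mem_iff_get.mp hvl
    exact ESDAux.classify D hpq (noV p k hk) (noV q k hk) (noT k hk)
      (hdisj _ hvl) hvN
  have hbound : ∀ c : H', {v | v ∈ l ∧ ∃ t, v ∈ D.ηi c t}.ncard ≤ 2 := by
    intro c
    by_contra hgt
    push_neg at hgt
    have hfin : {v | v ∈ l ∧ ∃ t, v ∈ D.ηi c t}.Finite :=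
      l.finite_toSet.subset (fun v hv => hv.1)
    obtain ⟨v1, v2, v3, hv1, hv2, hv3, h12, h13, h23⟩ := (Set.two_lt_ncard_iff hfin).mp hgt
    obtain ⟨⟨k1, hk1⟩, hg1⟩ := List.mem_iff_get.mp hv1.1
    obtain ⟨⟨k2, hk2⟩, hg2⟩ := List.mem_iff_get.mp hv2.1
    obtain ⟨⟨k3, hk3⟩, hg3⟩ := List.mem_iff_get.mp hv3.1
    subst hg1; subst hg2; subst hg3
    have key : ∀ (a b : ℕ) (ha : a < l.length) (hb : b < l.length),
        (∃ t, l.get ⟨a, ha⟩ ∈ D.ηi c t) → (∃ t, l.get ⟨b, hb⟩ ∈ D.ηi c t) →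
        l.get ⟨a, ha⟩ ≠ l.get ⟨b, hb⟩ → a + 1 = b ∨ b + 1 = a := by
      rintro a b ha hb ⟨ta, hta⟩ ⟨tb, htb⟩ hnev
      by_cases htt : ta = tb
      · subst htt
        have h1 : ¬ (a + 2 ≤ b) := fun h =>
          noTwo (a + (l.length - 1 - b)) c ta a b ha hb h (le_refl _) hta htb
        have h2 : ¬ (b + 2 ≤ a) := fun h =>
          noTwo (b + (l.length - 1 - a)) c ta b a hb ha h (le_refl _) htb hta
        have hab : a ≠ b := fun h => hnev (by subst h; rfl)
        omega
      · have hA := D.complete c ta tb (ESDAux.adjι D hta) (ESDAux.adjι D htb) htt _ hta _ htb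
        exact adjcon a b ha hb hA
    have hd12 : k1 ≠ k2 := fun h => h12 (congrArg l.get (Fin.ext h))
    have hd13 : k1 ≠ k3 := fun h => h13 (congrArg l.get (Fin.ext h))
    have hd23 : k2 ≠ k3 := fun h => h23 (congrArg l.get (Fin.ext h))
    have c12 := key k1 k2 hk1 hk2 hv1.2 hv2.2 h12
    have c13 := key k1 k3 hk1 hk3 hv1.2 hv3.2 h13
    have c23 := key k2 k3 hk2 hk3 hv2.2 hv3.2 h23
    omega
  have hsub : {v | v ∈ l ∧ v ∈ closedNbhd G (D.fullEdge p q)} ⊆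
      {v | v ∈ l ∧ ∃ t, v ∈ D.ηi p t} ∪ {v | v ∈ l ∧ ∃ t, v ∈ D.ηi q t} := by
    intro v hv
    rcases hclass v hv.1 hv.2 with ⟨t, _, ht⟩ | ⟨t, _, ht⟩
    · exact Or.inl ⟨hv.1, t, ht⟩
    · exact Or.inr ⟨hv.1, t, ht⟩
  have hfin1 : {v | v ∈ l ∧ ∃ t, v ∈ D.ηi p t}.Finite :=
    l.finite_toSet.subset (fun v hv => hv.1)
  have hfin2 : {v | v ∈ l ∧ ∃ t, v ∈ D.ηi q t}.Finite :=
    l.finite_toSet.subset (fun v hv => hv.1)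
  calc {v | v ∈ l ∧ v ∈ closedNbhd G (D.fullEdge p q)}.ncard
      ≤ ({v | v ∈ l ∧ ∃ t, v ∈ D.ηi p t} ∪ {v | v ∈ l ∧ ∃ t, v ∈ D.ηi q t}).ncard :=
        Set.ncard_le_ncard hsub (hfin1.union hfin2)
    _ ≤ {v | v ∈ l ∧ ∃ t, v ∈ D.ηi p t}.ncard + {v | v ∈ l ∧ ∃ t, v ∈ D.ηi q t}.ncard :=
        Set.ncard_union_le _ _
    _ ≤ 4 := by
        have h1 := hbound p
        have h2 := hbound q
        omega
end

section
/- Let G be a graph with nonnegative vertex weights, let Q = (q₀, …, q_k) be an induced path such that every connected component of G − N[V(Q)] has weight at most half of the total weight W of V(G), and suppose Q is minimal with this property (i.e., no proper subpath (q₀, …, q_j) with j < k has the property). If k ≥ 1, then G − N[V(Q) \ {q_k}] has a connected component C with weight strictly greater than W/2, and the last vertex q_k has a neighbor in C. -/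
lemma reachIn_mem' {V : Type*} {G : SimpleGraph V} {T : Set V} {v u : V}
    (h : ReachIn G T v u) (hv : v ∈ T) : u ∈ T := by
  induction h with
  | refl => exact hv
  | tail _ h2 _ => exact h2.2.2

lemma wsum_mono' {V : Type*} [Fintype V] (w : V → ℕ) {S S' : Set V} (h : S ⊆ S') :
    wsum w S ≤ wsum w S' := by
  apply Finset.sum_le_sum_of_subset
  exact Set.Finite.toFinset_subset_toFinset.mpr h

lemma reachIn_mono' {V : Type*} {G : SimpleGraph V} {T T' : Set V} {v : V}
    (hsub : ∀ u, ReachIn G T v u → u ∈ T') :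
    ∀ u, ReachIn G T v u → ReachIn G T' v u := by
  intro u h
  induction h with
  | refl => exact Relation.ReflTransGen.refl
  | tail h1 h2 ih =>
      exact ih.tail ⟨h2.1, hsub _ h1, hsub _ (h1.tail h2)⟩

/-- for a minimal induced path whose closed neighborhood's removal
leaves only components of weight at most half, removing the neighborhood of the path
minus its last vertex leaves a component of weight more than half, and the last
vertex has a neighbor in it. -/
theorem minimal_gyarfas_path_last_vertex {V : Type*} [Fintype V]
    (G : SimpleGraph V) (w : V → ℕ) (l : List V) (hl : IsInducedPathList G l)
    (hne : l ≠ []) (hlen : 2 ≤ l.length)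
    (hprop : CompsSmall G w (Set.univ \ closedNbhd G {v | v ∈ l}) (wsum w Set.univ / 2))
    (hmin : ∀ j : ℕ, j + 1 < l.length →
      ¬ CompsSmall G w (Set.univ \ closedNbhd G {v | v ∈ l.take (j + 1)})
        (wsum w Set.univ / 2)) :
    ∃ v ∈ Set.univ \ closedNbhd G {u | u ∈ l.dropLast},
      wsum w Set.univ <
        2 * wsum w {u | ReachIn G (Set.univ \ closedNbhd G {u | u ∈ l.dropLast}) v u} ∧
      ∃ u, ReachIn G (Set.univ \ closedNbhd G {u | u ∈ l.dropLast}) v u ∧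
        G.Adj (l.getLast hne) u := by
  classical
  have hlen' : l.length - 2 + 1 < l.length := by omega
  have hdl : l.dropLast = l.take (l.length - 2 + 1) := by
    rw [List.dropLast_eq_take]; congr 1; omega
  have hnc := hmin _ hlen'
  rw [← hdl] at hnc
  unfold CompsSmall at hnc
  push_neg at hnc
  obtain ⟨v, hvT, hbig⟩ := hnc
  set T : Set V := Set.univ \ closedNbhd G {u | u ∈ l.dropLast} with hT
  set W := wsum w Set.univ with hWdef
  -- the last vertex is in the closed neighborhood of dropLast
  have hn2 : l.length - 2 < l.length := by omega
  have hn2' : l.length - 2 < l.dropLast.length := by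
    rw [List.length_dropLast]; omega
  have hadjlast : G.Adj (l.get ⟨l.length - 2, hn2⟩) (l.getLast hne) := by
    have h1 : l.length - 1 < l.length := by omega
    have := (hl.2.2 (l.length - 2) (l.length - 1) hn2 h1).mpr (Or.inl (by omega))
    have hg : l.getLast hne = l.get ⟨l.length - 1, h1⟩ := by
      rw [List.getLast_eq_getElem]; simp
    rw [hg]; exact this
  have hmemdl : l.get ⟨l.length - 2, hn2⟩ ∈ l.dropLast := by
    have h := List.getElem_mem hn2'
    rw [List.getElem_dropLast] at h
    simpa using h
  have hlastcn : l.getLast hne ∈ closedNbhd G {u | u ∈ l.dropLast} :=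
    Or.inr ⟨_, hmemdl, hadjlast⟩
  refine ⟨v, hvT, ?_, ?_⟩
  · have := (Nat.div_lt_iff_lt_mul (by norm_num : (0:ℕ) < 2)).mp hbig
    omega
  · by_contra hcon
    push_neg at hcon
    -- every vertex reachable from v in T is outside closedNbhd of the whole l
    have hsub : ∀ u, ReachIn G T v u →
        u ∈ Set.univ \ closedNbhd G {u | u ∈ l} := by
      intro u hu
      have huT : u ∈ T := reachIn_mem' hu hvT
      refine ⟨trivial, ?_⟩
      intro hmem
      have hsplit : ∀ s, s ∈ l → s ∈ l.dropLast ∨ s = l.getLast hne := by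
        intro s hs
        rw [← List.dropLast_append_getLast hne] at hs
        rcases List.mem_append.mp hs with h | h
        · exact Or.inl h
        · exact Or.inr (List.mem_singleton.mp h)
      rcases hmem with hul | ⟨s, hs, hadj⟩
      · rcases hsplit u hul with h | h
        · exact huT.2 (Or.inl h)
        · rw [h] at huT; exact huT.2 hlastcn
      · rcases hsplit s hs with h | h
        · exact huT.2 (Or.inr ⟨s, h, hadj⟩)
        · rw [h] at hadj
          exact hcon u hu hadj
    have hv' : v ∈ Set.univ \ closedNbhd G {u | u ∈ l} :=
      hsub v Relation.ReflTransGen.refl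
    have hle := hprop v hv'
    have hmono : {u | ReachIn G T v u} ⊆
        {u | ReachIn G (Set.univ \ closedNbhd G {u | u ∈ l}) v u} :=
      fun u hu => reachIn_mono' hsub u hu
    have := wsum_mono' w hmono
    omega
end
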